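/- Let a, b ≥ 0 and suppose Q₁, Q₂ : S×A → ℝ satisfy |(TQ₂)(s,a) − Q₁(s,a)| ≤ a for all (s,a) ∈ S×A and ‖Q₂ − Q₁‖∞ ≤ b. Then ‖Q₁ − Q*‖∞ ≤ a/(1−γ) + γ·b/(1−γ). -/

import Mathlib

open Finset

/-- Maximum of `Q s' a'` over actions `a'`. -/
noncomputable def maxQ {S A : Type*} [Fintype A] [Nonempty A]
    (Q : S → A → ℝ) (s' : S) : ℝ :=
  univ.sup' univ_nonempty (fun a' => Q s' a')

/-- The Bellman optimality operator. -/
noncomputable def bellmanT {S A : Type*} [Fintype S] [Fintype A] [Nonempty A]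
    (P r : S → A → S → ℝ) (γ : ℝ) (Q : S → A → ℝ) : S → A → ℝ :=
  fun s a => ∑ s', P s a s' * (r s a s' + γ * maxQ Q s')

/-- Sup norm on `ℝ^{S×A}`. -/
noncomputable def supNorm {S A : Type*} [Fintype S] [Fintype A] [Nonempty S] [Nonempty A]
    (Q : S → A → ℝ) : ℝ :=
  univ.sup' univ_nonempty (fun p : S × A => |Q p.1 p.2|)

lemma supNorm_le_iff {S A : Type*} [Fintype S] [Fintype A] [Nonempty S] [Nonempty A]
    (Q : S → A → ℝ) (c : ℝ) : supNorm Q ≤ c ↔ ∀ s a, |Q s a| ≤ c := by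
  rw [supNorm, Finset.sup'_le_iff]
  exact ⟨fun h s a => h (s, a) (mem_univ _), fun h p _ => h p.1 p.2⟩

lemma abs_le_supNorm {S A : Type*} [Fintype S] [Fintype A] [Nonempty S] [Nonempty A]
    (Q : S → A → ℝ) (s : S) (a : A) : |Q s a| ≤ supNorm Q :=
  Finset.le_sup' (f := fun p : S × A => |Q p.1 p.2|) (mem_univ (s, a))

lemma maxQ_sub_le {S A : Type*} [Fintype A] [Nonempty A]
    (Q Q' : S → A → ℝ) (s : S) (c : ℝ) (h : ∀ a, |Q s a - Q' s a| ≤ c) :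
    |maxQ Q s - maxQ Q' s| ≤ c := by
  rw [abs_le]
  constructor
  · rw [neg_le, neg_sub]
    rw [sub_le_iff_le_add, maxQ, Finset.sup'_le_iff]
    intro a _
    have := Finset.le_sup' (f := fun a' => Q s a') (Finset.mem_univ a)
    have h2 := (abs_le.mp (h a)).1
    simp only [maxQ]
    linarith
  · rw [sub_le_iff_le_add, maxQ, Finset.sup'_le_iff]
    intro a _
    have := Finset.le_sup' (f := fun a' => Q' s a') (Finset.mem_univ a)
    have h2 := (abs_le.mp (h a)).2
    simp only [maxQ]
    linarith

lemma bellman_contract {S A : Type*} [Fintype S] [Fintype A] [Nonempty S] [Nonempty A]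
    (P r : S → A → S → ℝ) (γ : ℝ) (hγ0 : 0 ≤ γ)
    (hP0 : ∀ s a s', 0 ≤ P s a s') (hP1 : ∀ s a, ∑ s', P s a s' = 1)
    (Q Q' : S → A → ℝ) (s : S) (a : A) :
    |bellmanT P r γ Q s a - bellmanT P r γ Q' s a|
      ≤ γ * supNorm (fun s a' => Q s a' - Q' s a') := by
  have key : bellmanT P r γ Q s a - bellmanT P r γ Q' s a
      = ∑ s', P s a s' * (γ * (maxQ Q s' - maxQ Q' s')) := by
    simp only [bellmanT, ← Finset.sum_sub_distrib]
    congr 1; funext s'; ring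
  rw [key]
  calc |∑ s', P s a s' * (γ * (maxQ Q s' - maxQ Q' s'))|
      ≤ ∑ s', |P s a s' * (γ * (maxQ Q s' - maxQ Q' s'))| := Finset.abs_sum_le_sum_abs _ _
    _ ≤ ∑ s', P s a s' * (γ * supNorm (fun s a' => Q s a' - Q' s a')) := by
        apply Finset.sum_le_sum
        intro s' _
        rw [abs_mul, abs_mul, abs_of_nonneg (hP0 s a s'), abs_of_nonneg hγ0]
        apply mul_le_mul_of_nonneg_left _ (hP0 s a s')
        apply mul_le_mul_of_nonneg_left _ hγ0
        apply maxQ_sub_le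
        intro a'
        exact abs_le_supNorm (fun s a' => Q s a' - Q' s a') s' a'
    _ = γ * supNorm (fun s a' => Q s a' - Q' s a') := by
        rw [← Finset.sum_mul, hP1]; ring

theorem bellman_residual_perturbation_bound
    {S A : Type*} [Fintype S] [Fintype A] [Nonempty S] [Nonempty A]
    (P r : S → A → S → ℝ) (γ : ℝ) (hγ0 : 0 ≤ γ) (hγ1 : γ < 1)
    (hP0 : ∀ s a s', 0 ≤ P s a s') (hP1 : ∀ s a, ∑ s', P s a s' = 1)
    (Qstar : S → A → ℝ) (hQstar : bellmanT P r γ Qstar = Qstar)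
    (a b : ℝ) (ha : 0 ≤ a) (hb : 0 ≤ b)
    (Q₁ Q₂ : S → A → ℝ)
    (h₁ : ∀ s a', |bellmanT P r γ Q₂ s a' - Q₁ s a'| ≤ a)
    (h₂ : supNorm (fun s a' => Q₂ s a' - Q₁ s a') ≤ b) :
    supNorm (fun s a' => Q₁ s a' - Qstar s a') ≤ a / (1 - γ) + γ * b / (1 - γ) := by
  set d := supNorm (fun s a' => Q₁ s a' - Qstar s a') with hd
  have hγpos : 0 < 1 - γ := by linarith
  have hdb : d ≤ a + γ * b + γ * d := by
    rw [hd, supNorm_le_iff]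
    intro s a'
    have t1 := h₁ s a'
    have t2 := bellman_contract P r γ hγ0 hP0 hP1 Q₂ Qstar s a'
    rw [hQstar] at t2
    have t3 : supNorm (fun s a' => Q₂ s a' - Qstar s a') ≤ b + d := by
      rw [supNorm_le_iff]
      intro s a'
      have u1 := abs_le_supNorm (fun s a' => Q₂ s a' - Q₁ s a') s a'
      have u2 := abs_le_supNorm (fun s a' => Q₁ s a' - Qstar s a') s a'
      calc |Q₂ s a' - Qstar s a'| = |(Q₂ s a' - Q₁ s a') + (Q₁ s a' - Qstar s a')| := by
            ring_nf
        _ ≤ |Q₂ s a' - Q₁ s a'| + |Q₁ s a' - Qstar s a'| := abs_add_le _ _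
        _ ≤ b + d := by have := h₂; linarith
    have t4 : |Q₁ s a' - Qstar s a'|
        ≤ |bellmanT P r γ Q₂ s a' - Q₁ s a'| + |bellmanT P r γ Q₂ s a' - Qstar s a'| := by
      calc |Q₁ s a' - Qstar s a'|
          = |(-(bellmanT P r γ Q₂ s a' - Q₁ s a')) + (bellmanT P r γ Q₂ s a' - Qstar s a')| := by
            ring_nf
        _ ≤ |(-(bellmanT P r γ Q₂ s a' - Q₁ s a'))| + |bellmanT P r γ Q₂ s a' - Qstar s a'| :=
            abs_add_le _ _
        _ = _ := by rw [abs_neg]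
    have t5 : γ * supNorm (fun s a' => Q₂ s a' - Qstar s a') ≤ γ * (b + d) :=
      mul_le_mul_of_nonneg_left t3 hγ0
    nlinarith
  have hfin : d ≤ (a + γ * b) / (1 - γ) := by
    rw [le_div_iff₀ hγpos]; nlinarith
  calc d ≤ (a + γ * b) / (1 - γ) := hfin
    _ = a / (1 - γ) + γ * b / (1 - γ) := by rw [add_div]
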